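/- Suppose each V_i is an SStF from Σ̂_i to Σ_i with data (α_i, κ_i, ρ_i, ψ_i, G_i, Ĝ_i, H_i, X̄_i), and suppose there exist μ_1,…,μ_N > 0 and a coupling matrix M̂ for the abstract interconnection such that the matrix [GM; I_{q̃}]ᵀ X_cmp [GM; I_{q̃}] is negative semidefinite and GMH = ĜM̂. Then V(x, x̂) := Σ_{i=1}^N μ_i V_i(x_i, x̂_i) is a stochastic simulation function from 𝓘(Σ̂_1,…,Σ̂_N) (with coupling M̂) to 𝓘(Σ_1,…,Σ_N) (with coupling M); i.e.: (a) α(‖h(x) − ĥ(x̂)‖) ≤ V(x, x̂) for all x, x̂, where α := ᾱ^{-1} and ᾱ(r) := max{ Σ_{i=1}^N α_i^{-1}(s_i) : s_i ≥ 0, Σ_{i=1}^N μ_i s_i = r } is a class-K∞ function; and (b) for all x, x̂ and all ν̂ = (ν̂_1,…,ν̂_N) there exists ν = (ν_1,…,ν_N) such that, with w = M·[h_{21}(x_1);…;h_{2N}(x_N)] and ŵ = M̂·[ĥ_{21}(x̂_1);…;ĥ_{2N}(x̂_N)] (with block components w_i, ŵ_i), Σ_{i=1}^N μ_i ∫∫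 V_i(f_i(x_i, ν_i, w_i, v), f̂_i(x̂_i, ν̂_i, ŵ_i, v̂)) dμ_i(v) dμ̂_i(v̂) − V(x, x̂) ≤ −κ(V(x, x̂)) + ρ_ext(‖ν̂‖) + ψ, where κ(r) := min{ Σ_i μ_i κ_i(s_i) : s_i ≥ 0, Σ_i μ_i s_i = r } is of class K, ρ_ext(r) := max{ Σ_i μ_i ρ_i(s_i) : s_i ≥ 0, ‖(s_1,…,s_N)‖ = r } is of class K∞ ∪ {0}, and ψ := Σ_{i=1}^N μ_i ψ_i. -/

import Mathlib

open MeasureTheory Matrix Set Filter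

section AuxLemmas

lemma aux_ivt (g : ℝ → ℝ) (hc : ContinuousOn g (Ici 0)) (h0 : g 0 = 0)
    (ht : Tendsto g atTop atTop) : ∀ t : ℝ, 0 ≤ t → ∃ u, 0 ≤ u ∧ g u = t := by
  intro t htt
  obtain ⟨b, hb⟩ := (tendsto_atTop.mp ht t).exists_forall_of_atTop
  set b' := max b 0 with hb'
  have h1 : t ∈ Icc (g 0) (g b') := ⟨by rw [h0]; exact htt, hb b' (le_max_left _ _)⟩
  obtain ⟨u, hu1, hu2⟩ := intermediate_value_Icc (le_max_right b 0)
    (hc.mono Icc_subset_Ici_self) h1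
  exact ⟨u, hu1.1, hu2⟩

lemma aux_inv_pack (α αinv : ℝ → ℝ) (hc : ContinuousOn α (Ici 0))
    (hm : StrictMonoOn α (Ici 0)) (h0 : α 0 = 0) (ht : Tendsto α atTop atTop)
    (hi : ∀ t ∈ Ici (0:ℝ), αinv (α t) = t ∧ α (αinv t) = t) :
    αinv 0 = 0 ∧ (∀ t, 0 ≤ t → 0 ≤ αinv t) ∧ StrictMonoOn αinv (Ici 0) ∧
      ContinuousOn αinv (Ici 0) ∧ Tendsto αinv atTop atTop ∧ (∀ t, 0 ≤ t → 0 ≤ α t) := by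
  have hαnn : ∀ t, 0 ≤ t → 0 ≤ α t := by
    intro t htt
    rcases eq_or_lt_of_le htt with h | h
    · simp [← h, h0]
    · exact le_of_lt (h0 ▸ hm (mem_Ici.mpr le_rfl) (le_of_lt h) h)
  have hsurj := aux_ivt α hc h0 ht
  have hval : ∀ t, 0 ≤ t → ∀ u, 0 ≤ u → α u = t → αinv t = u := by
    intro t htt u hu hut
    rw [← hut, (hi u hu).1]
  have hinv0 : αinv 0 = 0 := hval 0 le_rfl 0 le_rfl h0
  have hnn : ∀ t, 0 ≤ t → 0 ≤ αinv t := by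
    intro t htt
    obtain ⟨u, hu, hut⟩ := hsurj t htt
    rw [hval t htt u hu hut]; exact hu
  have hsm : StrictMonoOn αinv (Ici 0) := by
    intro s hs t htt hst
    obtain ⟨u, hu, hus⟩ := hsurj s hs
    obtain ⟨v, hv, hvt⟩ := hsurj t htt
    rw [hval s hs u hu hus, hval t htt v hv hvt]
    by_contra hle
    push_neg at hle
    exact absurd (hus ▸ hvt ▸ hm.monotoneOn hv hu hle) (not_le.mpr hst)
  have hmono : MonotoneOn αinv (Ici 0) := hsm.monotoneOn
  have hcont : ContinuousOn αinv (Ici 0) := by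
    set g : ℝ → ℝ := fun t => if t < 0 then t else αinv t with hg
    have hgm : Monotone g := by
      intro s t hst
      by_cases hs : s < 0
      · by_cases htt : t < 0
        · simp [hg, hs, htt, hst]
        · simp only [hg, if_pos hs, if_neg htt]
          exact le_trans (le_of_lt hs) (hnn t (not_lt.mp htt))
      · have htt : ¬ t < 0 := fun h => hs (lt_of_le_of_lt hst h)
        simp only [hg, if_neg hs, if_neg htt]
        exact hmono (not_lt.mp hs) (not_lt.mp htt) hst
    have hgs : Function.Surjective g := by
      intro y
      by_cases hy : y < 0
      · exact ⟨y, by simp [hg, hy]⟩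
      · refine ⟨α y, ?_⟩
        have : ¬ α y < 0 := not_lt.mpr (hαnn y (not_lt.mp hy))
        simp only [hg, if_neg this]
        exact (hi y (not_lt.mp hy)).1
    have : Continuous g := hgm.continuous_of_surjective hgs
    exact this.continuousOn.congr (fun t htt => by simp [hg, not_lt.mpr (mem_Ici.mp htt)])
  have htop : Tendsto αinv atTop atTop := by
    rw [tendsto_atTop]
    intro b
    filter_upwards [eventually_ge_atTop (α (max b 0)), eventually_ge_atTop (0:ℝ)] with t h1 h2
    have := hmono (hαnn _ (le_max_right b 0)) h2 h1
    rw [(hi (max b 0) (le_max_right b 0)).1] at this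
    exact le_trans (le_max_left b 0) this
  exact ⟨hinv0, hnn, hsm, hcont, htop, hαnn⟩


lemma aux_sup_machine {n : ℕ} (φ : (Fin n → ℝ) → ℝ) (hφc : Continuous φ)
    (hφh : ∀ c : ℝ, 0 ≤ c → ∀ s, φ (c • s) = c * φ s)
    (hφ0 : ∀ s : Fin n → ℝ, (∀ i, 0 ≤ s i) → φ s = 0 → s = 0)
    (C : ℝ) (hφb : ∀ s : Fin n → ℝ, (∀ i, 0 ≤ s i) → φ s = 1 → ∀ i, s i ≤ C)
    (u₀ : Fin n → ℝ) (hu₀ : (∀ i, 0 ≤ u₀ i) ∧ φ u₀ = 1)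
    (h : Fin n → ℝ → ℝ) (hc : ∀ i, ContinuousOn (h i) (Ici 0)) (h0 : ∀ i, h i 0 = 0) :
    (∀ rr, 0 ≤ rr → ∃ s : Fin n → ℝ, (∀ i, 0 ≤ s i) ∧ φ s = rr ∧
      (∑ i, h i (s i)) = sSup {t | ∃ s : Fin n → ℝ, (∀ i, 0 ≤ s i) ∧ φ s = rr ∧
        t = ∑ i, h i (s i)}) ∧
    (∀ rr, 0 ≤ rr → ∀ s : Fin n → ℝ, (∀ i, 0 ≤ s i) → φ s = rr →
      (∑ i, h i (s i)) ≤ sSup {t | ∃ s : Fin n → ℝ, (∀ i, 0 ≤ s i) ∧ φ s = rr ∧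
        t = ∑ i, h i (s i)}) ∧
    ContinuousOn (fun rr => sSup {t | ∃ s : Fin n → ℝ, (∀ i, 0 ≤ s i) ∧ φ s = rr ∧
      t = ∑ i, h i (s i)}) (Ici 0) ∧
    sSup {t | ∃ s : Fin n → ℝ, (∀ i, 0 ≤ s i) ∧ φ s = 0 ∧ t = ∑ i, h i (s i)} = 0 := by
  classical
  set K : Set (Fin n → ℝ) := {u | (∀ i, 0 ≤ u i) ∧ φ u = 1} with hKdef
  have hKne : K.Nonempty := ⟨u₀, hu₀⟩
  have hKcl : IsClosed K := by
    have h1 : IsClosed {u : Fin n → ℝ | ∀ i, 0 ≤ u i} := by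
      have : {u : Fin n → ℝ | ∀ i, 0 ≤ u i} = ⋂ i, {u | 0 ≤ u i} := by
        ext u; simp [mem_iInter]
      rw [this]
      exact isClosed_iInter fun i => isClosed_le continuous_const (continuous_apply i)
    exact h1.inter (isClosed_eq hφc continuous_const)
  have hK : IsCompact K := by
    refine (isCompact_univ_pi (fun i => isCompact_Icc (a := (0:ℝ)) (b := C))).of_isClosed_subset
      hKcl ?_
    intro u hu
    exact fun i _ => ⟨hu.1 i, hφb u hu.1 hu.2 i⟩
  have hKnn : ∀ u ∈ K, ∀ i, 0 ≤ u i := fun u hu => hu.1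
  set F : ℝ → (Fin n → ℝ) → ℝ := fun rr u => ∑ i, h i (rr * u i) with hFdef
  have hFc : ContinuousOn (fun q : ℝ × (Fin n → ℝ) => F q.1 q.2) (Ici 0 ×ˢ K) := by
    apply continuousOn_finset_sum
    intro i _
    have hcc : Continuous fun q : ℝ × (Fin n → ℝ) => q.1 * q.2 i := by fun_prop
    refine (hc i).comp hcc.continuousOn ?_
    intro q hq
    exact mul_nonneg hq.1 (hKnn q.2 hq.2 i)
  have hFrrc : ∀ rr, 0 ≤ rr → ContinuousOn (F rr) K := by
    intro rr hrr
    exact hFc.comp (Continuous.continuousOn (continuous_const.prodMk continuous_id))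
      (fun u hu => ⟨hrr, hu⟩)
  have hset : ∀ rr, 0 ≤ rr → {t | ∃ s : Fin n → ℝ, (∀ i, 0 ≤ s i) ∧ φ s = rr ∧
      t = ∑ i, h i (s i)} = F rr '' K := by
    intro rr hrr
    ext t
    constructor
    · rintro ⟨s, hs, hφs, rfl⟩
      rcases eq_or_lt_of_le hrr with h' | h'
      · have hs0 : s = 0 := hφ0 s hs (by rw [hφs, ← h'])
        refine ⟨u₀, hu₀, ?_⟩
        rw [← h', hFdef]
        simp only [hs0, zero_mul]
        simp [h0]
      · refine ⟨rr⁻¹ • s, ⟨fun i => mul_nonneg (inv_nonneg.mpr hrr) (hs i), ?_⟩, ?_⟩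
        · rw [hφh rr⁻¹ (inv_nonneg.mpr hrr) s, hφs, inv_mul_cancel₀ (ne_of_gt h')]
        · simp only [hFdef, Pi.smul_apply, smul_eq_mul]
          congr 1
          ext i
          rw [← mul_assoc, mul_inv_cancel₀ (ne_of_gt h'), one_mul]
    · rintro ⟨u, hu, rfl⟩
      refine ⟨rr • u, fun i => mul_nonneg hrr (hu.1 i), ?_, ?_⟩
      · rw [hφh rr hrr u, hu.2, mul_one]
      · simp [hFdef]
  have hbdd : ∀ rr, 0 ≤ rr → BddAbove (F rr '' K) := fun rr hrr =>
    (hK.image_of_continuousOn (hFrrc rr hrr)).bddAbove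
  have hattain : ∀ rr, 0 ≤ rr → ∃ s : Fin n → ℝ, (∀ i, 0 ≤ s i) ∧ φ s = rr ∧
      (∑ i, h i (s i)) = sSup {t | ∃ s : Fin n → ℝ, (∀ i, 0 ≤ s i) ∧ φ s = rr ∧
        t = ∑ i, h i (s i)} := by
    intro rr hrr
    obtain ⟨x, hx, hsup⟩ := hK.exists_sSup_image_eq hKne (hFrrc rr hrr)
    refine ⟨rr • x, fun i => mul_nonneg hrr (hx.1 i), by rw [hφh rr hrr x, hx.2, mul_one], ?_⟩
    rw [hset rr hrr, hsup]
    simp [hFdef]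
  have hub : ∀ rr, 0 ≤ rr → ∀ s : Fin n → ℝ, (∀ i, 0 ≤ s i) → φ s = rr →
      (∑ i, h i (s i)) ≤ sSup {t | ∃ s : Fin n → ℝ, (∀ i, 0 ≤ s i) ∧ φ s = rr ∧
        t = ∑ i, h i (s i)} := by
    intro rr hrr s hs hφs
    rw [hset rr hrr]
    refine le_csSup (hbdd rr hrr) ?_
    rw [← hset rr hrr]
    exact ⟨s, hs, hφs, rfl⟩
  have hzero : sSup {t | ∃ s : Fin n → ℝ, (∀ i, 0 ≤ s i) ∧ φ s = 0 ∧
      t = ∑ i, h i (s i)} = 0 := by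
    rw [hset 0 le_rfl]
    have : F 0 '' K = {0} := by
      apply Subset.antisymm
      · rintro t ⟨u, hu, rfl⟩
        simp [hFdef, h0]
      · rintro t ht
        rw [mem_singleton_iff] at ht
        exact ⟨u₀, hu₀, by simp [hFdef, h0, ht]⟩
    rw [this, csSup_singleton]
  have hcont : ContinuousOn (fun rr => sSup {t | ∃ s : Fin n → ℝ, (∀ i, 0 ≤ s i) ∧ φ s = rr ∧
      t = ∑ i, h i (s i)}) (Ici 0) := by
    have hcg : ContinuousOn (fun rr => sSup (F rr '' K)) (Ici 0) := by
      intro rr₀ hrr₀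
      rw [Metric.continuousWithinAt_iff]
      intro ε hε
      set Cc : Set (ℝ × (Fin n → ℝ)) := (Icc (rr₀ - 1) (rr₀ + 1) ∩ Ici 0) ×ˢ K with hCc
      have hCcK : IsCompact Cc := (isCompact_Icc.inter_right isClosed_Ici).prod hK
      have hUC := hCcK.uniformContinuousOn_of_continuous
        (hFc.mono (prod_mono inter_subset_right (subset_refl K)))
      rw [Metric.uniformContinuousOn_iff] at hUC
      obtain ⟨δ₀, hδ₀, Hδ⟩ := hUC (ε/2) (half_pos hε)
      refine ⟨min δ₀ 1, lt_min hδ₀ one_pos, ?_⟩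
      intro t hti htd
      have ht1 : |t - rr₀| < 1 := lt_of_lt_of_le (by rw [← Real.dist_eq]; exact htd) (min_le_right _ _)
      have htIcc : t ∈ Icc (rr₀ - 1) (rr₀ + 1) ∩ Ici 0 := by
        constructor
        · rw [abs_lt] at ht1
          constructor <;> linarith [ht1.1, ht1.2]
        · exact hti
      have hrrIcc : rr₀ ∈ Icc (rr₀ - 1) (rr₀ + 1) ∩ Ici 0 :=
        ⟨⟨by linarith, by linarith⟩, hrr₀⟩
      have hptwise : ∀ u ∈ K, |F t u - F rr₀ u| < ε/2 := by
        intro u hu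
        have := Hδ (t, u) ⟨htIcc, hu⟩ (rr₀, u) ⟨hrrIcc, hu⟩ (by
          rw [Prod.dist_eq, dist_self]
          simpa [max_eq_left dist_nonneg] using lt_of_lt_of_le htd (min_le_left _ _))
        rwa [Real.dist_eq] at this
      have hne' : (F t '' K).Nonempty := hKne.image _
      have hne'' : (F rr₀ '' K).Nonempty := hKne.image _
      have h1 : sSup (F t '' K) ≤ sSup (F rr₀ '' K) + ε/2 := by
        apply csSup_le hne'
        rintro y ⟨u, hu, rfl⟩
        have h2 : F t u ≤ F rr₀ u + ε/2 := by
          have := (abs_lt.mp (hptwise u hu)).2; linarith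
        exact le_trans h2 (add_le_add_left (le_csSup (hbdd rr₀ hrr₀) ⟨u, hu, rfl⟩) _)
      have h2 : sSup (F rr₀ '' K) ≤ sSup (F t '' K) + ε/2 := by
        apply csSup_le hne''
        rintro y ⟨u, hu, rfl⟩
        have h2 : F rr₀ u ≤ F t u + ε/2 := by
          have := (abs_lt.mp (hptwise u hu)).1; linarith
        exact le_trans h2 (add_le_add_left (le_csSup (hbdd t hti) ⟨u, hu, rfl⟩) _)
      rw [Real.dist_eq, abs_lt]
      constructor <;> linarith
    refine hcg.congr ?_
    intro rr hrr
    simp only []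
    rw [hset rr hrr]
  exact ⟨hattain, hub, hcont, hzero⟩


lemma aux_sup_strictmono {n : ℕ} (φ : (Fin n → ℝ) → ℝ)
    (hφh : ∀ c : ℝ, 0 ≤ c → ∀ s, φ (c • s) = c * φ s)
    (h : Fin n → ℝ → ℝ)
    (hstrict : ∀ i, StrictMonoOn (h i) (Ici 0) ∨ h i = fun _ => 0)
    (h0 : ∀ i, h i 0 = 0)
    (j : Fin n) (hj : StrictMonoOn (h j) (Ici 0))
    (uj : Fin n → ℝ) (hujnn : ∀ i, 0 ≤ uj i) (hujφ : φ uj = 1) (hujpos : 0 < uj j)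
    (hujz : ∀ i, i ≠ j → uj i = 0)
    (g : ℝ → ℝ)
    (hatt : ∀ rr, 0 ≤ rr → ∃ s : Fin n → ℝ, (∀ i, 0 ≤ s i) ∧ φ s = rr ∧
      (∑ i, h i (s i)) = g rr)
    (hub : ∀ rr, 0 ≤ rr → ∀ s : Fin n → ℝ, (∀ i, 0 ≤ s i) → φ s = rr →
      (∑ i, h i (s i)) ≤ g rr)
    (hg0 : g 0 = 0) :
    StrictMonoOn g (Ici 0) ∧ (∀ rr, 0 ≤ rr → h j (rr * uj j) ≤ g rr) := by
  classical
  have hmono : ∀ i, MonotoneOn (h i) (Ici 0) := by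
    intro i
    rcases hstrict i with hi | hi
    · exact hi.monotoneOn
    · rw [hi]; exact monotoneOn_const
  have hnn : ∀ i t, 0 ≤ t → 0 ≤ h i t := by
    intro i t htt
    have := hmono i (self_mem_Ici) (mem_Ici.mpr htt) htt
    rwa [h0 i] at this
  have hsingle : ∀ rr, 0 ≤ rr → h j (rr * uj j) ≤ g rr := by
    intro rr hrr
    have hval : (∑ i, h i ((rr • uj) i)) = h j (rr * uj j) := by
      rw [Finset.sum_eq_single j]
      · simp
      · intro i _ hij
        simp [hujz i hij, h0]
      · simp
    rw [← hval]
    exact hub rr hrr (rr • uj) (fun i => mul_nonneg hrr (hujnn i))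
      (by rw [hφh rr hrr uj, hujφ, mul_one])
  have hpos : ∀ rr, 0 < rr → 0 < g rr := by
    intro rr hrr
    refine lt_of_lt_of_le ?_ (hsingle rr (le_of_lt hrr))
    have := hj (self_mem_Ici) (mem_Ici.mpr (le_of_lt (mul_pos hrr hujpos))) (mul_pos hrr hujpos)
    rwa [h0 j] at this
  refine ⟨?_, hsingle⟩
  intro rr hrr rr' hrr' hlt
  rcases eq_or_lt_of_le (mem_Ici.mp hrr) with h' | h'
  · rw [← h', hg0]
    exact hpos rr' (h' ▸ hlt)
  · -- 0 < rr < rr'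
    obtain ⟨s, hs, hφs, hsval⟩ := hatt rr (le_of_lt h')
    have hsumpos : 0 < ∑ i, h i (s i) := hsval ▸ hpos rr h'
    have hex : ∃ i, 0 < h i (s i) := by
      by_contra hno
      push_neg at hno
      have : (∑ i, h i (s i)) ≤ 0 := Finset.sum_nonpos (fun i _ => hno i)
      linarith
    obtain ⟨i, hi⟩ := hex
    have hsipos : 0 < s i := by
      rcases eq_or_lt_of_le (hs i) with h'' | h''
      · rw [← h'', h0] at hi; linarith
      · exact h''
    have histrict : StrictMonoOn (h i) (Ici 0) := by
      rcases hstrict i with hh | hh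
      · exact hh
      · rw [hh] at hi; norm_num at hi
    set c : ℝ := rr' / rr with hc
    have hc1 : 1 < c := (one_lt_div h').mpr hlt
    have hkey : (∑ k, h k ((c • s) k)) ≤ g rr' := by
      refine hub rr' (le_trans (le_of_lt h') (le_of_lt hlt)) _
        (fun k => mul_nonneg (by positivity) (hs k)) ?_
      rw [hφh c (by positivity) s, hφs, hc, div_mul_cancel₀ _ (ne_of_gt h')]
    refine lt_of_le_of_lt (le_of_eq hsval.symm) (lt_of_lt_of_le ?_ hkey)
    refine Finset.sum_lt_sum (fun k _ => ?_) ⟨i, Finset.mem_univ i, ?_⟩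
    · simp only [Pi.smul_apply, smul_eq_mul]
      exact hmono k (mem_Ici.mpr (hs k)) (mem_Ici.mpr (mul_nonneg (by positivity) (hs k)))
        (le_mul_of_one_le_left (hs k) (le_of_lt hc1))
    · simp only [Pi.smul_apply, smul_eq_mul]
      exact histrict (mem_Ici.mpr (hs i)) (mem_Ici.mpr (mul_nonneg (by positivity) (hs i)))
        (lt_mul_of_one_lt_left hsipos hc1)


lemma aux_inf_strictmono {n : ℕ} (φ : (Fin n → ℝ) → ℝ)
    (hφh : ∀ c : ℝ, 0 ≤ c → ∀ s, φ (c • s) = c * φ s)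
    (hφ0 : ∀ s : Fin n → ℝ, (∀ i, 0 ≤ s i) → φ s = 0 → s = 0)
    (h : Fin n → ℝ → ℝ) (hstrict : ∀ i, StrictMonoOn (h i) (Ici 0))
    (h0 : ∀ i, h i 0 = 0) (g : ℝ → ℝ)
    (hatt : ∀ rr, 0 ≤ rr → ∃ s : Fin n → ℝ, (∀ i, 0 ≤ s i) ∧ φ s = rr ∧
      (∑ i, h i (s i)) = g rr)
    (hlb : ∀ rr, 0 ≤ rr → ∀ s : Fin n → ℝ, (∀ i, 0 ≤ s i) → φ s = rr →
      g rr ≤ ∑ i, h i (s i))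
    (hg0 : g 0 = 0) : StrictMonoOn g (Ici 0) := by
  classical
  have hmono : ∀ i, MonotoneOn (h i) (Ici 0) := fun i => (hstrict i).monotoneOn
  have hnn : ∀ i t, 0 ≤ t → 0 ≤ h i t := by
    intro i t htt
    have := hmono i self_mem_Ici (mem_Ici.mpr htt) htt
    rwa [h0 i] at this
  intro rr hrr rr' hrr' hlt
  have hrr'pos : 0 < rr' := lt_of_le_of_lt (mem_Ici.mp hrr) hlt
  obtain ⟨s', hs', hφs', hval'⟩ := hatt rr' (le_of_lt hrr'pos)
  have hsne : s' ≠ 0 := by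
    intro hcon
    rw [hcon] at hφs'
    have : φ (0 : Fin n → ℝ) = 0 := by
      have := hφh 0 le_rfl 0
      simpa using this
    rw [this] at hφs'
    exact absurd hφs'.symm (ne_of_gt hrr'pos)
  obtain ⟨i, hi⟩ := Function.ne_iff.mp hsne
  have hsipos : 0 < s' i := lt_of_le_of_ne (hs' i) (by simpa [eq_comm] using hi)
  rcases eq_or_lt_of_le (mem_Ici.mp hrr) with h' | h'
  · rw [← h', hg0, ← hval']
    have h1 : 0 < h i (s' i) := by
      have := hstrict i self_mem_Ici (mem_Ici.mpr (hs' i)) hsipos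
      rwa [h0 i] at this
    calc (0:ℝ) < h i (s' i) := h1
    _ ≤ ∑ k, h k (s' k) := Finset.single_le_sum (fun k _ => hnn k (s' k) (hs' k))
        (Finset.mem_univ i)
  · set c : ℝ := rr / rr' with hc
    have hc0 : 0 ≤ c := by positivity
    have hc1 : c < 1 := (div_lt_one hrr'pos).mpr hlt
    have hkey : g rr ≤ ∑ k, h k ((c • s') k) :=
      hlb rr (le_of_lt h') _ (fun k => mul_nonneg hc0 (hs' k))
        (by rw [hφh c hc0 s', hφs', hc, div_mul_cancel₀ _ (ne_of_gt hrr'pos)])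
    refine lt_of_le_of_lt hkey (lt_of_lt_of_le ?_ (le_of_eq hval'))
    refine Finset.sum_lt_sum (fun k _ => ?_) ⟨i, Finset.mem_univ i, ?_⟩
    · simp only [Pi.smul_apply, smul_eq_mul]
      exact hmono k (mem_Ici.mpr (mul_nonneg hc0 (hs' k))) (mem_Ici.mpr (hs' k))
        (mul_le_of_le_one_left (hs' k) (le_of_lt hc1))
    · simp only [Pi.smul_apply, smul_eq_mul]
      exact hstrict i (mem_Ici.mpr (mul_nonneg hc0 (hs' i))) (mem_Ici.mpr (hs' i))
        (mul_lt_of_lt_one_left hsipos hc1)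


lemma aux_phi_lin {n : ℕ} (μw : Fin n → ℝ) (hμw : ∀ i, 0 < μw i) :
    (Continuous fun s : Fin n → ℝ => ∑ i, μw i * s i) ∧
    (∀ c : ℝ, 0 ≤ c → ∀ s : Fin n → ℝ, (∑ i, μw i * (c • s) i) = c * ∑ i, μw i * s i) ∧
    (∀ s : Fin n → ℝ, (∀ i, 0 ≤ s i) → (∑ i, μw i * s i) = 0 → s = 0) ∧
    (∀ s : Fin n → ℝ, (∀ i, 0 ≤ s i) → (∑ i, μw i * s i) = 1 → ∀ i,
      s i ≤ ∑ k, (μw k)⁻¹) ∧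
    (∀ j, (∀ k, 0 ≤ (fun k => if k = j then (μw j)⁻¹ else 0) k) ∧
      (∑ i, μw i * (fun k => if k = j then (μw j)⁻¹ else 0) i) = 1) := by
  refine ⟨?_, ?_, ?_, ?_, ?_⟩
  · exact continuous_finset_sum _ fun i _ =>
      (continuous_const.mul (continuous_apply i))
  · intro c hc s
    rw [Finset.mul_sum]
    congr 1; ext i; simp [Pi.smul_apply, smul_eq_mul]; ring
  · intro s hs hsum
    funext i
    have hnn : ∀ k ∈ Finset.univ, 0 ≤ μw k * s k :=
      fun k _ => mul_nonneg (le_of_lt (hμw k)) (hs k)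
    have := (Finset.sum_eq_zero_iff_of_nonneg hnn).mp hsum i (Finset.mem_univ i)
    have := (mul_eq_zero.mp this).resolve_left (ne_of_gt (hμw i))
    simpa using this
  · intro s hs hsum i
    have h1 : μw i * s i ≤ 1 := by
      rw [← hsum]
      exact Finset.single_le_sum (fun k _ => mul_nonneg (le_of_lt (hμw k)) (hs k))
        (Finset.mem_univ i)
    have h2 : s i ≤ (μw i)⁻¹ := by
      nlinarith [h1, hμw i, mul_inv_cancel₀ (ne_of_gt (hμw i)), hs i,
        mul_pos (hμw i) (hμw i)]
    refine le_trans h2 ?_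
    exact Finset.single_le_sum (fun k _ => inv_nonneg.mpr (le_of_lt (hμw k)))
      (Finset.mem_univ i)
  · intro j
    constructor
    · intro k
      by_cases h : k = j <;> simp [h, le_of_lt (hμw j), inv_nonneg]
    · rw [Finset.sum_eq_single j]
      · simp [mul_inv_cancel₀ (ne_of_gt (hμw j))]
      · intro k _ hk; simp [hk]
      · simp

lemma aux_phi_sqrt {n : ℕ} :
    (Continuous fun s : Fin n → ℝ => Real.sqrt (∑ i, s i ^ 2)) ∧
    (∀ c : ℝ, 0 ≤ c → ∀ s : Fin n → ℝ,
      Real.sqrt (∑ i, ((c • s) i) ^ 2) = c * Real.sqrt (∑ i, s i ^ 2)) ∧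
    (∀ s : Fin n → ℝ, (∀ i, 0 ≤ s i) → Real.sqrt (∑ i, s i ^ 2) = 0 → s = 0) ∧
    (∀ s : Fin n → ℝ, (∀ i, 0 ≤ s i) → Real.sqrt (∑ i, s i ^ 2) = 1 → ∀ i, s i ≤ 1) ∧
    (∀ j : Fin n, (∀ k, 0 ≤ (fun k => if k = j then (1:ℝ) else 0) k) ∧
      Real.sqrt (∑ i, ((fun k => if k = j then (1:ℝ) else 0) i) ^ 2) = 1) := by
  have hsumnn : ∀ s : Fin n → ℝ, 0 ≤ ∑ i, s i ^ 2 :=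
    fun s => Finset.sum_nonneg fun i _ => sq_nonneg _
  refine ⟨?_, ?_, ?_, ?_, ?_⟩
  · exact Real.continuous_sqrt.comp (continuous_finset_sum _ fun i _ =>
      (continuous_apply i).pow 2)
  · intro c hc s
    have : (∑ i, ((c • s) i) ^ 2) = c ^ 2 * ∑ i, s i ^ 2 := by
      rw [Finset.mul_sum]; congr 1; ext i; simp [Pi.smul_apply, smul_eq_mul]; ring
    rw [this, Real.sqrt_mul (sq_nonneg c), Real.sqrt_sq hc]
  · intro s hs hsum
    have h1 : (∑ i, s i ^ 2) = 0 := by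
      have := Real.sqrt_eq_zero (hsumnn s) |>.mp hsum
      exact this
    funext i
    have := (Finset.sum_eq_zero_iff_of_nonneg (fun k _ => sq_nonneg (s k))).mp h1 i
      (Finset.mem_univ i)
    have := pow_eq_zero_iff (n := 2) (by norm_num) |>.mp this
    simpa using this
  · intro s hs hsum i
    have h1 : (∑ k, s k ^ 2) = 1 := by
      have := Real.sqrt_eq_one.mp hsum
      exact this
    have h2 : s i ^ 2 ≤ 1 := by
      rw [← h1]
      exact Finset.single_le_sum (fun k _ => sq_nonneg (s k)) (Finset.mem_univ i)
    nlinarith [hs i]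
  · intro j
    refine ⟨fun k => by by_cases h : k = j <;> simp [h], ?_⟩
    rw [Finset.sum_eq_single j]
    · simp
    · intro k _ hk; simp [hk]
    · simp


lemma aux_bd_mulVec {N : ℕ} {d e : Fin N → ℕ}
    (P : ∀ i, Matrix (Fin (d i)) (Fin (e i)) ℝ) (v : ((i : Fin N) × Fin (e i)) → ℝ)
    (i : Fin N) (a : Fin (d i)) :
    (blockDiagonal' P).mulVec v ⟨i, a⟩ = (P i).mulVec (fun b => v ⟨i, b⟩) a := by
  classical
  simp only [Matrix.mulVec, dotProduct]
  rw [← Finset.univ_sigma_univ, Finset.sum_sigma]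
  rw [Finset.sum_eq_single i]
  · congr 1
    ext b
    rw [Matrix.blockDiagonal'_apply_eq]
  · intro j _ hj
    apply Finset.sum_eq_zero
    intro b _
    rw [Matrix.blockDiagonal'_apply_ne _ _ _ (Ne.symm hj), zero_mul]
  · simp

lemma aux_bd_quad {N : ℕ} {d e : Fin N → ℕ} (μw : Fin N → ℝ)
    (P : ∀ i, Matrix (Fin (d i)) (Fin (e i)) ℝ)
    (u : ((i : Fin N) × Fin (d i)) → ℝ) (v : ((i : Fin N) × Fin (e i)) → ℝ) :
    u ⬝ᵥ (blockDiagonal' (fun i => μw i • P i)).mulVec v =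
      ∑ i, μw i * ((fun a => u ⟨i, a⟩) ⬝ᵥ (P i).mulVec (fun b => v ⟨i, b⟩)) := by
  classical
  simp only [dotProduct]
  rw [← Finset.univ_sigma_univ, Finset.sum_sigma]
  congr 1
  ext i
  rw [Finset.mul_sum]
  congr 1
  ext a
  rw [aux_bd_mulVec (fun i => μw i • P i) v i a]
  simp only [Matrix.smul_mulVec, Pi.smul_apply, smul_eq_mul]
  ring


end AuxLemmas

/-- compositional construction of a stochastic simulation function.
If each `Vi i` is a stochastic storage function from the abstraction `Σ̂_i` to the subsystem
`Σ_i` with data `(α_i, κ_i, ρ_i, ψ_i, G_i, Ĝ_i, H_i, X̄_i)` and the dissipativity LMI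
`[GM; I]ᵀ X_cmp [GM; I] ⪯ 0` together with `GMH = ĜM̂` hold, then
`V(x,x̂) = Σ_i μ_i V_i(x_i, x̂_i)` is a stochastic simulation function from the abstract
interconnection (with coupling `M̂`) to the concrete interconnection (with coupling `M`):
(a) `α(‖h(x) − ĥ(x̂)‖) ≤ V(x,x̂)` with `α = ᾱ⁻¹`, where
`ᾱ(r) = max{Σ_i α_i⁻¹(s_i) : s_i ≥ 0, Σ_i μ_i s_i = r}` is a class-`K∞` function, and
(b) the expected-decrease condition with
`κ(r) = min{Σ_i μ_i κ_i(s_i) : s_i ≥ 0, Σ_i μ_i s_i = r}` of class `K`,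
`ρ_ext(r) = max{Σ_i μ_i ρ_i(s_i) : s_i ≥ 0, ‖(s_1,…,s_N)‖ = r}` of class `K∞ ∪ {0}`, and
`ψ = Σ_i μ_i ψ_i`. Stacked external-output/input norms are written as
`√(Σ_i ‖·_i‖²)`, which is the Euclidean norm of the concatenated vector. -/
theorem stmt_5
    (N : ℕ) (hN : 1 ≤ N)
    -- dimensions of internal inputs/outputs and abstract external inputs:
    (p ph q1 q2 qh2 mh r : Fin N → ℕ)
    -- state, external-input and noise spaces of the subsystems and their abstractions:
    (X : Fin N → Type) [∀ i, MeasurableSpace (X i)]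
    (Xh : Fin N → Type) [∀ i, MeasurableSpace (Xh i)]
    (U : Fin N → Type)
    (Vn : Fin N → Type) [∀ i, MeasurableSpace (Vn i)]
    (Vnh : Fin N → Type) [∀ i, MeasurableSpace (Vnh i)]
    (μn : ∀ i, Measure (Vn i)) [∀ i, IsProbabilityMeasure (μn i)]
    (μnh : ∀ i, Measure (Vnh i)) [∀ i, IsProbabilityMeasure (μnh i)]
    -- transition maps (state, external input, internal input, noise):
    (f : ∀ i, X i → U i → (Fin (p i) → ℝ) → Vn i → X i)
    (fh : ∀ i, Xh i → EuclideanSpace ℝ (Fin (mh i)) → (Fin (ph i) → ℝ) → Vnh i → Xh i)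
    -- external and internal output maps:
    (h1 : ∀ i, X i → EuclideanSpace ℝ (Fin (q1 i))) (h2 : ∀ i, X i → Fin (q2 i) → ℝ)
    (hh1 : ∀ i, Xh i → EuclideanSpace ℝ (Fin (q1 i))) (hh2 : ∀ i, Xh i → Fin (qh2 i) → ℝ)
    -- the stochastic storage functions and their data:
    (Vi : ∀ i, X i → Xh i → ℝ)
    (hVimeas : ∀ i, Measurable fun pr : X i × Xh i => Vi i pr.1 pr.2)
    (hVinonneg : ∀ i xi xhi, 0 ≤ Vi i xi xhi)
    (α κ ρ : Fin N → ℝ → ℝ) (ψ : Fin N → ℝ) (hψ : ∀ i, 0 ≤ ψ i)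
    -- `α_i ∈ K∞` together with its inverse `αinv i` on `[0,∞)`:
    (hα_cont : ∀ i, ContinuousOn (α i) (Ici 0)) (hα_mono : ∀ i, StrictMonoOn (α i) (Ici 0))
    (hα_zero : ∀ i, α i 0 = 0) (hα_top : ∀ i, Tendsto (α i) atTop atTop)
    (αinv : Fin N → ℝ → ℝ)
    (hαinv : ∀ i, ∀ t ∈ Ici (0 : ℝ), αinv i (α i t) = t ∧ α i (αinv i t) = t)
    -- `κ_i ∈ K`:
    (hκ_cont : ∀ i, ContinuousOn (κ i) (Ici 0)) (hκ_mono : ∀ i, StrictMonoOn (κ i) (Ici 0))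
    (hκ_zero : ∀ i, κ i 0 = 0)
    -- `ρ_i ∈ K∞ ∪ {0}`:
    (hρ : ∀ i, (ContinuousOn (ρ i) (Ici 0) ∧ StrictMonoOn (ρ i) (Ici 0) ∧ ρ i 0 = 0 ∧
            Tendsto (ρ i) atTop atTop) ∨ ρ i = fun _ => 0)
    -- matrices of the storage functions:
    (G : ∀ i, Matrix (Fin (r i)) (Fin (p i)) ℝ)
    (Gh : ∀ i, Matrix (Fin (r i)) (Fin (ph i)) ℝ)
    (H : ∀ i, Matrix (Fin (q2 i)) (Fin (qh2 i)) ℝ)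
    (X11 : ∀ i, Matrix (Fin (r i)) (Fin (r i)) ℝ)
    (X12 : ∀ i, Matrix (Fin (r i)) (Fin (q2 i)) ℝ)
    (X21 : ∀ i, Matrix (Fin (q2 i)) (Fin (r i)) ℝ)
    (X22 : ∀ i, Matrix (Fin (q2 i)) (Fin (q2 i)) ℝ)
    (hXsymm : ∀ i, (fromBlocks (X11 i) (X12 i) (X21 i) (X22 i)).IsSymm)
    -- SStF condition (i):
    (hSStF1 : ∀ i xi xhi, α i ‖h1 i xi - hh1 i xhi‖ ≤ Vi i xi xhi)
    -- SStF condition (ii):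
    (hSStF2 : ∀ i (xi : X i) (xhi : Xh i) (νhi : EuclideanSpace ℝ (Fin (mh i))),
      ∃ νi : U i, ∀ (wi : Fin (p i) → ℝ) (whi : Fin (ph i) → ℝ),
        (∫ v, ∫ vh, Vi i (f i xi νi wi v) (fh i xhi νhi whi vh) ∂μnh i ∂μn i) -
            Vi i xi xhi ≤
          -κ i (Vi i xi xhi) +
            (Sum.elim ((G i).mulVec wi - (Gh i).mulVec whi)
                (h2 i xi - (H i).mulVec (hh2 i xhi)) ⬝ᵥ
              (fromBlocks (X11 i) (X12 i) (X21 i) (X22 i)).mulVec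
                (Sum.elim ((G i).mulVec wi - (Gh i).mulVec whi)
                  (h2 i xi - (H i).mulVec (hh2 i xhi)))) +
            ρ i ‖νhi‖ + ψ i)
    -- the coupling matrices of the two interconnections:
    (M : Matrix ((i : Fin N) × Fin (p i)) ((i : Fin N) × Fin (q2 i)) ℝ)
    (Mh : Matrix ((i : Fin N) × Fin (ph i)) ((i : Fin N) × Fin (qh2 i)) ℝ)
    -- weights `μ_i > 0`:
    (μw : Fin N → ℝ) (hμw : ∀ i, 0 < μw i)
    -- compositionality condition (5): `[GM; I_{q̃}]ᵀ X_cmp [GM; I_{q̃}] ⪯ 0`: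
    (hLMI : ∀ z : ((i : Fin N) × Fin (q2 i)) → ℝ,
      z ⬝ᵥ ((fromRows (blockDiagonal' G * M)
              (1 : Matrix ((i : Fin N) × Fin (q2 i)) ((i : Fin N) × Fin (q2 i)) ℝ))ᵀ *
            (fromBlocks
              (blockDiagonal' fun i => μw i • X11 i) (blockDiagonal' fun i => μw i • X12 i)
              (blockDiagonal' fun i => μw i • X21 i) (blockDiagonal' fun i => μw i • X22 i)) *
            fromRows (blockDiagonal' G * M)
              (1 : Matrix ((i : Fin N) × Fin (q2 i)) ((i : Fin N) × Fin (q2 i)) ℝ)).mulVec z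
        ≤ 0)
    -- compositionality condition (6): `GMH = ĜM̂`:
    (hGMH : blockDiagonal' G * M * blockDiagonal' H = blockDiagonal' Gh * Mh) :
    -- conclusion (a): `V` satisfies `α(‖h(x) − ĥ(x̂)‖) ≤ V(x,x̂)` with `α = ᾱ⁻¹`, `ᾱ ∈ K∞`:
    (∃ αbar αfun : ℝ → ℝ,
      (∀ rr : ℝ, αbar rr = sSup {t : ℝ | ∃ s : Fin N → ℝ, (∀ i, 0 ≤ s i) ∧
        (∑ i, μw i * s i) = rr ∧ t = ∑ i, αinv i (s i)}) ∧
      (∀ rr : ℝ, 0 ≤ rr → ∃ s : Fin N → ℝ, (∀ i, 0 ≤ s i) ∧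
        (∑ i, μw i * s i) = rr ∧ (∑ i, αinv i (s i)) = αbar rr) ∧
      ContinuousOn αbar (Ici 0) ∧ StrictMonoOn αbar (Ici 0) ∧ αbar 0 = 0 ∧
      Tendsto αbar atTop atTop ∧
      (∀ t ∈ Ici (0 : ℝ), αfun (αbar t) = t ∧ αbar (αfun t) = t) ∧
      (∀ (x : ∀ i, X i) (xh : ∀ i, Xh i),
        αfun (Real.sqrt (∑ i, ‖h1 i (x i) - hh1 i (xh i)‖ ^ 2)) ≤
          ∑ i, μw i * Vi i (x i) (xh i))) ∧
    -- conclusion (b): the expected-decrease condition of a stochastic simulation function: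
    (∃ κc ρc : ℝ → ℝ,
      (∀ rr : ℝ, κc rr = sInf {t : ℝ | ∃ s : Fin N → ℝ, (∀ i, 0 ≤ s i) ∧
        (∑ i, μw i * s i) = rr ∧ t = ∑ i, μw i * κ i (s i)}) ∧
      (∀ rr : ℝ, 0 ≤ rr → ∃ s : Fin N → ℝ, (∀ i, 0 ≤ s i) ∧
        (∑ i, μw i * s i) = rr ∧ (∑ i, μw i * κ i (s i)) = κc rr) ∧
      ContinuousOn κc (Ici 0) ∧ StrictMonoOn κc (Ici 0) ∧ κc 0 = 0 ∧
      (∀ rr : ℝ, ρc rr = sSup {t : ℝ | ∃ s : Fin N → ℝ, (∀ i, 0 ≤ s i) ∧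
        Real.sqrt (∑ i, s i ^ 2) = rr ∧ t = ∑ i, μw i * ρ i (s i)}) ∧
      (∀ rr : ℝ, 0 ≤ rr → ∃ s : Fin N → ℝ, (∀ i, 0 ≤ s i) ∧
        Real.sqrt (∑ i, s i ^ 2) = rr ∧ (∑ i, μw i * ρ i (s i)) = ρc rr) ∧
      ((ContinuousOn ρc (Ici 0) ∧ StrictMonoOn ρc (Ici 0) ∧ ρc 0 = 0 ∧
          Tendsto ρc atTop atTop) ∨ ρc = fun _ => 0) ∧
      (∀ (x : ∀ i, X i) (xh : ∀ i, Xh i)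
          (νh : ∀ i, EuclideanSpace ℝ (Fin (mh i))),
        ∃ ν : ∀ i, U i,
          (∑ i, μw i *
              ∫ v, ∫ vh,
                Vi i
                  (f i (x i) (ν i)
                    (fun a =>
                      M.mulVec (fun jc => h2 jc.1 (x jc.1) jc.2) ⟨i, a⟩) v)
                  (fh i (xh i) (νh i)
                    (fun a =>
                      Mh.mulVec (fun jc => hh2 jc.1 (xh jc.1) jc.2) ⟨i, a⟩) vh)
                ∂μnh i ∂μn i) -
            (∑ i, μw i * Vi i (x i) (xh i)) ≤
          -κc (∑ i, μw i * Vi i (x i) (xh i)) +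
            ρc (Real.sqrt (∑ i, ‖νh i‖ ^ 2)) + ∑ i, μw i * ψ i)) := by
  classical
  obtain ⟨hφc, hφh, hφ0, hφb, hφsingle⟩ := aux_phi_lin μw hμw
  obtain ⟨hψc2, hψh2, hψ02, hψb2, hψsingle2⟩ := aux_phi_sqrt (n := N)
  set j0 : Fin N := ⟨0, hN⟩ with hj0
  have hpack := fun i => aux_inv_pack (α i) (αinv i) (hα_cont i) (hα_mono i) (hα_zero i)
    (hα_top i) (hαinv i)
  have hαinv0 : ∀ i, αinv i 0 = 0 := fun i => (hpack i).1
  have hαinvnn : ∀ i t, 0 ≤ t → 0 ≤ αinv i t := fun i => (hpack i).2.1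
  have hαinvsm : ∀ i, StrictMonoOn (αinv i) (Ici 0) := fun i => (hpack i).2.2.1
  have hαinvc : ∀ i, ContinuousOn (αinv i) (Ici 0) := fun i => (hpack i).2.2.2.1
  have hαinvtop : ∀ i, Tendsto (αinv i) atTop atTop := fun i => (hpack i).2.2.2.2.1
  have hαnn : ∀ i t, 0 ≤ t → 0 ≤ α i t := fun i => (hpack i).2.2.2.2.2
  constructor
  · -- Part (a)
    set αbar : ℝ → ℝ := fun rr => sSup {t : ℝ | ∃ s : Fin N → ℝ, (∀ i, 0 ≤ s i) ∧
      (∑ i, μw i * s i) = rr ∧ t = ∑ i, αinv i (s i)} with hαbardef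
    obtain ⟨hatt, hub, hcontg, hzero⟩ := aux_sup_machine (fun s : Fin N → ℝ => ∑ i, μw i * s i)
      hφc hφh hφ0 _ hφb _ ⟨(hφsingle j0).1, (hφsingle j0).2⟩ αinv hαinvc hαinv0
    have hg0 : αbar 0 = 0 := hzero
    obtain ⟨hsm, hsingle⟩ := aux_sup_strictmono (fun s : Fin N → ℝ => ∑ i, μw i * s i)
      hφh αinv (fun i => Or.inl (hαinvsm i)) hαinv0 j0 (hαinvsm j0) _ (hφsingle j0).1
      (hφsingle j0).2 (by simp [inv_pos]; exact hμw j0) (fun i hij => by simp [hij]) αbar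
      hatt hub hg0
    have hcont : ContinuousOn αbar (Ici 0) := hcontg
    have htop : Tendsto αbar atTop atTop := by
      have h1 : Tendsto (fun rr : ℝ => αinv j0 (rr * (fun k => if k = j0 then (μw j0)⁻¹
          else 0) j0)) atTop atTop := by
        apply (hαinvtop j0).comp
        apply tendsto_id.atTop_mul_const
        simp [inv_pos]
        exact hμw j0
      refine tendsto_atTop_mono' atTop ?_ h1
      filter_upwards [eventually_ge_atTop (0:ℝ)] with rr hrr
      exact hsingle rr hrr
    have hsurj := aux_ivt αbar hcont hg0 htop
    set αfun : ℝ → ℝ := fun t => if h : ∃ u, 0 ≤ u ∧ αbar u = t then h.choose else 0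
      with hαfundef
    have hαfun_spec : ∀ t, 0 ≤ t → 0 ≤ αfun t ∧ αbar (αfun t) = t := by
      intro t ht
      have h' := hsurj t ht
      simp only [hαfundef, dif_pos h']
      exact ⟨h'.choose_spec.1, h'.choose_spec.2⟩
    have hαfun_inv : ∀ t ∈ Ici (0:ℝ), αfun (αbar t) = t ∧ αbar (αfun t) = t := by
      intro t ht
      have habt : 0 ≤ αbar t := by rw [← hg0]; exact hsm.monotoneOn self_mem_Ici ht ht
      refine ⟨?_, (hαfun_spec t (mem_Ici.mp ht)).2⟩
      obtain ⟨hc1, hc2⟩ := hαfun_spec (αbar t) habt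
      exact hsm.injOn (mem_Ici.mpr hc1) ht hc2
    refine ⟨αbar, αfun, fun rr => rfl, hatt, hcont, hsm, hg0, htop, hαfun_inv, ?_⟩
    intro x xh
    set Vv : ℝ := ∑ i, μw i * Vi i (x i) (xh i) with hVv
    have hVnn : 0 ≤ Vv := Finset.sum_nonneg fun i _ =>
      mul_nonneg (le_of_lt (hμw i)) (hVinonneg i _ _)
    set zq : ℝ := Real.sqrt (∑ i, ‖h1 i (x i) - hh1 i (xh i)‖ ^ 2) with hzq
    have hzqnn : 0 ≤ zq := Real.sqrt_nonneg _
    have hz : zq ≤ αbar Vv := by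
      have ha1 : zq ≤ ∑ i, ‖h1 i (x i) - hh1 i (xh i)‖ := by
        rw [hzq]
        have ha2 := Finset.sum_sq_le_sq_sum_of_nonneg
          (f := fun i => ‖h1 i (x i) - hh1 i (xh i)‖) (s := Finset.univ)
          (fun i _ => norm_nonneg _)
        calc Real.sqrt (∑ i, ‖h1 i (x i) - hh1 i (xh i)‖ ^ 2)
            ≤ Real.sqrt ((∑ i, ‖h1 i (x i) - hh1 i (xh i)‖) ^ 2) := Real.sqrt_le_sqrt ha2
          _ = ∑ i, ‖h1 i (x i) - hh1 i (xh i)‖ := Real.sqrt_sq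
              (Finset.sum_nonneg fun i _ => norm_nonneg _)
      have ha3 : (∑ i, ‖h1 i (x i) - hh1 i (xh i)‖) ≤ ∑ i, αinv i (Vi i (x i) (xh i)) := by
        apply Finset.sum_le_sum
        intro i _
        have ha4 : αinv i (α i ‖h1 i (x i) - hh1 i (xh i)‖) = ‖h1 i (x i) - hh1 i (xh i)‖ :=
          (hαinv i _ (norm_nonneg _)).1
        rw [← ha4]
        exact (hαinvsm i).monotoneOn (mem_Ici.mpr (hαnn i _ (norm_nonneg _)))
          (mem_Ici.mpr (hVinonneg i _ _)) (hSStF1 i _ _)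
      have ha5 : (∑ i, αinv i (Vi i (x i) (xh i))) ≤ αbar Vv :=
        hub Vv hVnn (fun i => Vi i (x i) (xh i)) (fun i => hVinonneg i _ _) rfl
      linarith
    by_contra hgt
    push_neg at hgt
    obtain ⟨hb1, hb2⟩ := hαfun_spec zq hzqnn
    have := hsm (mem_Ici.mpr hVnn) (mem_Ici.mpr hb1) hgt
    rw [hb2] at this
    linarith
  · -- Part (b)
    set κc : ℝ → ℝ := fun rr => sInf {t : ℝ | ∃ s : Fin N → ℝ, (∀ i, 0 ≤ s i) ∧
      (∑ i, μw i * s i) = rr ∧ t = ∑ i, μw i * κ i (s i)} with hκcdef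
    set ρc : ℝ → ℝ := fun rr => sSup {t : ℝ | ∃ s : Fin N → ℝ, (∀ i, 0 ≤ s i) ∧
      Real.sqrt (∑ i, s i ^ 2) = rr ∧ t = ∑ i, μw i * ρ i (s i)} with hρcdef
    obtain ⟨katt, kub, kcont, kzero⟩ := aux_sup_machine (fun s : Fin N → ℝ => ∑ i, μw i * s i)
      hφc hφh hφ0 _ hφb _ ⟨(hφsingle j0).1, (hφsingle j0).2⟩
      (fun i t => -(μw i * κ i t))
      (fun i => (continuousOn_const.mul (hκ_cont i)).neg)
      (fun i => by show -(μw i * κ i 0) = 0; rw [hκ_zero i]; ring)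
    have hnegeq : ∀ rr : ℝ, κc rr = -sSup {t : ℝ | ∃ s : Fin N → ℝ, (∀ i, 0 ≤ s i) ∧
        (∑ i, μw i * s i) = rr ∧ t = ∑ i, -(μw i * κ i (s i))} := by
      intro rr
      rw [hκcdef]
      show sInf _ = _
      rw [Real.sInf_def]
      congr 1
      congr 1
      ext t
      simp only [Set.mem_neg, Set.mem_setOf_eq]
      constructor
      · rintro ⟨s, hs, hsum, hval⟩
        exact ⟨s, hs, hsum, by rw [Finset.sum_neg_distrib, ← hval, neg_neg]⟩
      · rintro ⟨s, hs, hsum, hval⟩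
        exact ⟨s, hs, hsum, by rw [hval, Finset.sum_neg_distrib, neg_neg]⟩
    have hκatt : ∀ rr, 0 ≤ rr → ∃ s : Fin N → ℝ, (∀ i, 0 ≤ s i) ∧ (∑ i, μw i * s i) = rr ∧
        (∑ i, μw i * κ i (s i)) = κc rr := by
      intro rr hrr
      obtain ⟨s, hs, hsum, hval⟩ := katt rr hrr
      refine ⟨s, hs, hsum, ?_⟩
      rw [hnegeq rr]
      rw [← hval, Finset.sum_neg_distrib, neg_neg]
    have hκlb : ∀ rr, 0 ≤ rr → ∀ s : Fin N → ℝ, (∀ i, 0 ≤ s i) → (∑ i, μw i * s i) = rr →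
        κc rr ≤ ∑ i, μw i * κ i (s i) := by
      intro rr hrr s hs hsum
      have h1 := kub rr hrr s hs hsum
      rw [Finset.sum_neg_distrib] at h1
      rw [hnegeq rr]
      linarith
    have hκcont : ContinuousOn κc (Ici 0) := by
      have heq : κc = fun rr => -sSup {t : ℝ | ∃ s : Fin N → ℝ, (∀ i, 0 ≤ s i) ∧
          (∑ i, μw i * s i) = rr ∧ t = ∑ i, -(μw i * κ i (s i))} := funext hnegeq
      rw [heq]
      exact kcont.neg
    have hκ0 : κc 0 = 0 := by rw [hnegeq 0, kzero, neg_zero]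
    have hκnn : ∀ i t, 0 ≤ t → 0 ≤ κ i t := by
      intro i t htt
      have := (hκ_mono i).monotoneOn self_mem_Ici (mem_Ici.mpr htt) htt
      rwa [hκ_zero i] at this
    have hκsm : StrictMonoOn κc (Ici 0) :=
      aux_inf_strictmono (fun s : Fin N → ℝ => ∑ i, μw i * s i) hφh hφ0
        (fun i t => μw i * κ i t)
        (fun i a ha b hb hab => mul_lt_mul_of_pos_left (hκ_mono i ha hb hab) (hμw i))
        (fun i => by show μw i * κ i 0 = 0; rw [hκ_zero i]; ring) κc hκatt hκlb hκ0
    have hρc_i : ∀ i, ContinuousOn (ρ i) (Ici 0) := by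
      intro i; rcases hρ i with h | h
      · exact h.1
      · rw [h]; exact continuousOn_const
    have hρ0_i : ∀ i, ρ i 0 = 0 := by
      intro i; rcases hρ i with h | h
      · exact h.2.2.1
      · rw [h]
    obtain ⟨ratt, rub, rcont, rzero⟩ := aux_sup_machine
      (fun s : Fin N → ℝ => Real.sqrt (∑ i, s i ^ 2)) hψc2 hψh2 hψ02 _ hψb2 _
      ⟨(hψsingle2 j0).1, (hψsingle2 j0).2⟩ (fun i t => μw i * ρ i t)
      (fun i => continuousOn_const.mul (hρc_i i))
      (fun i => by show μw i * ρ i 0 = 0; rw [hρ0_i i]; ring)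
    have hρdisj : (ContinuousOn ρc (Ici 0) ∧ StrictMonoOn ρc (Ici 0) ∧ ρc 0 = 0 ∧
        Tendsto ρc atTop atTop) ∨ ρc = fun _ => 0 := by
      by_cases hall : ∀ i, ρ i = fun _ => 0
      · right
        funext rr
        show sSup _ = 0
        rcases lt_or_ge rr 0 with hneg | hpos
        · have hempty : {t : ℝ | ∃ s : Fin N → ℝ, (∀ i, 0 ≤ s i) ∧
              Real.sqrt (∑ i, s i ^ 2) = rr ∧ t = ∑ i, μw i * ρ i (s i)} = ∅ := by
            apply eq_empty_iff_forall_notMem.mpr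
            rintro t ⟨s, hs, hsq, hval⟩
            have := Real.sqrt_nonneg (∑ i, s i ^ 2)
            linarith [hsq ▸ this]
          rw [hempty, Real.sSup_empty]
        · set sw : Fin N → ℝ := fun k => if k = j0 then rr else 0 with hswdef
          have hswnn : ∀ k, 0 ≤ sw k := by
            intro k; by_cases h : k = j0 <;> simp [hswdef, h, hpos]
          have hswsq : Real.sqrt (∑ i, sw i ^ 2) = rr := by
            rw [Finset.sum_eq_single j0]
            · simp [hswdef, Real.sqrt_sq hpos]
            · intro k _ hk; simp [hswdef, hk]
            · simp
          have hswval : (∑ i, μw i * ρ i (sw i)) = 0 :=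
            Finset.sum_eq_zero fun i _ => by simp [hall i]
          apply le_antisymm
          · apply Real.sSup_le _ le_rfl
            rintro t ⟨s, hs, hsq, hval⟩
            rw [hval]
            exact le_of_eq (Finset.sum_eq_zero fun i _ => by simp [hall i])
          · have := rub rr hpos sw hswnn hswsq
            rw [hswval] at this
            exact this
      · left
        push_neg at hall
        obtain ⟨j, hjne⟩ := hall
        obtain ⟨hjc, hjm, hjz, hjt⟩ := (hρ j).resolve_right hjne
        have hstrict : ∀ i, StrictMonoOn (fun t => μw i * ρ i t) (Ici 0) ∨
            (fun t => μw i * ρ i t) = fun _ => (0:ℝ) := by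
          intro i
          rcases hρ i with h | h
          · exact Or.inl fun a ha b hb hab =>
              mul_lt_mul_of_pos_left (h.2.1 ha hb hab) (hμw i)
          · exact Or.inr (funext fun t => by simp [h])
        have hρczero : ρc 0 = 0 := rzero
        obtain ⟨hsm2, hsingle2⟩ := aux_sup_strictmono
          (fun s : Fin N → ℝ => Real.sqrt (∑ i, s i ^ 2)) hψh2 (fun i t => μw i * ρ i t)
          hstrict (fun i => by show μw i * ρ i 0 = 0; rw [hρ0_i i]; ring) j
          (fun a ha b hb hab => mul_lt_mul_of_pos_left (hjm ha hb hab) (hμw j)) _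
          (hψsingle2 j).1 (hψsingle2 j).2 (by simp) (fun i hij => by simp [hij]) ρc
          ratt rub hρczero
        have htop2 : Tendsto ρc atTop atTop := by
          have h1 : Tendsto (fun rr : ℝ => μw j * ρ j (rr * (fun k => if k = j then (1:ℝ)
              else 0) j)) atTop atTop := by
            apply Tendsto.const_mul_atTop (hμw j)
            apply hjt.comp
            apply tendsto_id.atTop_mul_const
            simp
          refine tendsto_atTop_mono' atTop ?_ h1
          filter_upwards [eventually_ge_atTop (0:ℝ)] with rr hrr
          exact hsingle2 rr hrr
        exact ⟨rcont, hsm2, hρczero, htop2⟩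
    refine ⟨κc, ρc, fun rr => rfl, hκatt, hκcont, hκsm, hκ0, fun rr => rfl, ratt, hρdisj, ?_⟩
    intro x xh νh
    set h2v : ((i : Fin N) × Fin (q2 i)) → ℝ := fun jc => h2 jc.1 (x jc.1) jc.2 with hh2vdef
    set hh2v : ((i : Fin N) × Fin (qh2 i)) → ℝ := fun jc => hh2 jc.1 (xh jc.1) jc.2 with hhh2vdef
    refine ⟨fun i => (hSStF2 i (x i) (xh i) (νh i)).choose, ?_⟩
    have hν := fun i => (hSStF2 i (x i) (xh i) (νh i)).choose_spec
    set w : ((i : Fin N) × Fin (p i)) → ℝ := M.mulVec h2v with hwdef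
    set wh : ((i : Fin N) × Fin (ph i)) → ℝ := Mh.mulVec hh2v with hwhdef
    set z : ((i : Fin N) × Fin (q2 i)) → ℝ := h2v - (blockDiagonal' H).mulVec hh2v with hzdef
    set A : ((i : Fin N) × Fin (r i)) → ℝ := (blockDiagonal' G * M).mulVec z with hAdef
    have hai : ∀ i, (G i).mulVec (fun a => w ⟨i, a⟩) - (Gh i).mulVec (fun a => wh ⟨i, a⟩) =
        fun a => A ⟨i, a⟩ := by
      intro i
      funext a
      have h1 : (G i).mulVec (fun b => w ⟨i, b⟩) a = (blockDiagonal' G).mulVec w ⟨i, a⟩ :=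
        (aux_bd_mulVec G w i a).symm
      have h2 : (Gh i).mulVec (fun b => wh ⟨i, b⟩) a = (blockDiagonal' Gh).mulVec wh ⟨i, a⟩ :=
        (aux_bd_mulVec Gh wh i a).symm
      have h3 : (blockDiagonal' G).mulVec w = (blockDiagonal' G * M).mulVec h2v := by
        rw [hwdef, Matrix.mulVec_mulVec]
      have h4 : (blockDiagonal' Gh).mulVec wh =
          (blockDiagonal' G * M).mulVec ((blockDiagonal' H).mulVec hh2v) := by
        rw [hwhdef, Matrix.mulVec_mulVec, ← hGMH, Matrix.mulVec_mulVec]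
      have h5 : A = (blockDiagonal' G * M).mulVec h2v -
          (blockDiagonal' G * M).mulVec ((blockDiagonal' H).mulVec hh2v) := by
        rw [hAdef, hzdef, Matrix.mulVec_sub]
      simp only [Pi.sub_apply]
      rw [h1, h2, h3, h4, h5]
      simp [Pi.sub_apply]
    have hbi : ∀ i, h2 i (x i) - (H i).mulVec (hh2 i (xh i)) = fun c => z ⟨i, c⟩ := by
      intro i
      funext c
      simp only [Pi.sub_apply, hzdef]
      rw [aux_bd_mulVec H hh2v i c]
    have hquadsum : (∑ i, μw i * (Sum.elim (fun a => A ⟨i, a⟩) (fun c => z ⟨i, c⟩) ⬝ᵥ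
        (fromBlocks (X11 i) (X12 i) (X21 i) (X22 i)).mulVec
          (Sum.elim (fun a => A ⟨i, a⟩) (fun c => z ⟨i, c⟩)))) ≤ 0 := by
      have hstep1 : (∑ i, μw i * (Sum.elim (fun a => A ⟨i, a⟩) (fun c => z ⟨i, c⟩) ⬝ᵥ
          (fromBlocks (X11 i) (X12 i) (X21 i) (X22 i)).mulVec
            (Sum.elim (fun a => A ⟨i, a⟩) (fun c => z ⟨i, c⟩)))) =
          Sum.elim A z ⬝ᵥ (fromBlocks
            (blockDiagonal' fun i => μw i • X11 i) (blockDiagonal' fun i => μw i • X12 i)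
            (blockDiagonal' fun i => μw i • X21 i) (blockDiagonal' fun i => μw i • X22 i)).mulVec
            (Sum.elim A z) := by
        rw [Matrix.fromBlocks_mulVec, sumElim_dotProduct_sumElim, dotProduct_add,
          dotProduct_add, aux_bd_quad, aux_bd_quad, aux_bd_quad, aux_bd_quad,
          ← Finset.sum_add_distrib, ← Finset.sum_add_distrib, ← Finset.sum_add_distrib]
        apply Finset.sum_congr rfl
        intro i _
        rw [Matrix.fromBlocks_mulVec, sumElim_dotProduct_sumElim, dotProduct_add,
          dotProduct_add]
        simp only [Sum.elim_comp_inl, Sum.elim_comp_inr]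
        ring
      have hRz : fromRows (blockDiagonal' G * M)
          (1 : Matrix ((i : Fin N) × Fin (q2 i)) ((i : Fin N) × Fin (q2 i)) ℝ) *ᵥ z =
          Sum.elim A z := by
        rw [Matrix.fromRows_mulVec, Matrix.one_mulVec, hAdef]
      have hform : z ⬝ᵥ ((fromRows (blockDiagonal' G * M)
              (1 : Matrix ((i : Fin N) × Fin (q2 i)) ((i : Fin N) × Fin (q2 i)) ℝ))ᵀ *
            (fromBlocks
              (blockDiagonal' fun i => μw i • X11 i) (blockDiagonal' fun i => μw i • X12 i)
              (blockDiagonal' fun i => μw i • X21 i) (blockDiagonal' fun i => μw i • X22 i)) *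
            fromRows (blockDiagonal' G * M)
              (1 : Matrix ((i : Fin N) × Fin (q2 i)) ((i : Fin N) × Fin (q2 i)) ℝ)).mulVec z =
          Sum.elim A z ⬝ᵥ (fromBlocks
            (blockDiagonal' fun i => μw i • X11 i) (blockDiagonal' fun i => μw i • X12 i)
            (blockDiagonal' fun i => μw i • X21 i) (blockDiagonal' fun i => μw i • X22 i)).mulVec
            (Sum.elim A z) := by
        rw [Matrix.mul_assoc, ← Matrix.mulVec_mulVec (M := (fromRows (blockDiagonal' G * M)
              (1 : Matrix ((i : Fin N) × Fin (q2 i)) ((i : Fin N) × Fin (q2 i)) ℝ))ᵀ),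
          Matrix.dotProduct_mulVec, Matrix.vecMul_transpose, hRz,
          ← Matrix.mulVec_mulVec, hRz]
      rw [hstep1, ← hform]
      exact hLMI z
    have hVnn : 0 ≤ ∑ i, μw i * Vi i (x i) (xh i) :=
      Finset.sum_nonneg fun i _ => mul_nonneg (le_of_lt (hμw i)) (hVinonneg i _ _)
    have hκbound : κc (∑ i, μw i * Vi i (x i) (xh i)) ≤
        ∑ i, μw i * κ i (Vi i (x i) (xh i)) :=
      hκlb _ hVnn _ (fun i => hVinonneg i _ _) rfl
    have hρbound : (∑ i, μw i * ρ i ‖νh i‖) ≤ ρc (Real.sqrt (∑ i, ‖νh i‖ ^ 2)) :=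
      rub _ (Real.sqrt_nonneg _) (fun i => ‖νh i‖) (fun i => norm_nonneg _) rfl
    calc (∑ i, μw i * ∫ v, ∫ vh, Vi i (f i (x i) ((hSStF2 i (x i) (xh i) (νh i)).choose)
            (fun a => w ⟨i, a⟩) v) (fh i (xh i) (νh i) (fun a => wh ⟨i, a⟩) vh)
          ∂μnh i ∂μn i) - (∑ i, μw i * Vi i (x i) (xh i))
        = ∑ i, μw i * ((∫ v, ∫ vh, Vi i (f i (x i) ((hSStF2 i (x i) (xh i) (νh i)).choose)
            (fun a => w ⟨i, a⟩) v) (fh i (xh i) (νh i) (fun a => wh ⟨i, a⟩) vh)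
          ∂μnh i ∂μn i) - Vi i (x i) (xh i)) := by
          rw [← Finset.sum_sub_distrib]
          exact Finset.sum_congr rfl fun i _ => (mul_sub _ _ _).symm
      _ ≤ ∑ i, μw i * (-κ i (Vi i (x i) (xh i)) +
          (Sum.elim ((G i).mulVec (fun a => w ⟨i, a⟩) - (Gh i).mulVec (fun a => wh ⟨i, a⟩))
              (h2 i (x i) - (H i).mulVec (hh2 i (xh i))) ⬝ᵥ
            (fromBlocks (X11 i) (X12 i) (X21 i) (X22 i)).mulVec
              (Sum.elim ((G i).mulVec (fun a => w ⟨i, a⟩) - (Gh i).mulVec (fun a => wh ⟨i, a⟩))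
                (h2 i (x i) - (H i).mulVec (hh2 i (xh i))))) +
          ρ i ‖νh i‖ + ψ i) :=
          Finset.sum_le_sum fun i _ => mul_le_mul_of_nonneg_left
            (hν i (fun a => w ⟨i, a⟩) (fun a => wh ⟨i, a⟩)) (le_of_lt (hμw i))
      _ = ∑ i, μw i * (-κ i (Vi i (x i) (xh i)) +
          (Sum.elim (fun a => A ⟨i, a⟩) (fun c => z ⟨i, c⟩) ⬝ᵥ
            (fromBlocks (X11 i) (X12 i) (X21 i) (X22 i)).mulVec
              (Sum.elim (fun a => A ⟨i, a⟩) (fun c => z ⟨i, c⟩))) +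
          ρ i ‖νh i‖ + ψ i) :=
          Finset.sum_congr rfl fun i _ => by rw [hai i, hbi i]
      _ = -(∑ i, μw i * κ i (Vi i (x i) (xh i))) +
          (∑ i, μw i * (Sum.elim (fun a => A ⟨i, a⟩) (fun c => z ⟨i, c⟩) ⬝ᵥ
            (fromBlocks (X11 i) (X12 i) (X21 i) (X22 i)).mulVec
              (Sum.elim (fun a => A ⟨i, a⟩) (fun c => z ⟨i, c⟩)))) +
          (∑ i, μw i * ρ i ‖νh i‖) + (∑ i, μw i * ψ i) := by
          rw [← Finset.sum_neg_distrib, ← Finset.sum_add_distrib, ← Finset.sum_add_distrib,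
            ← Finset.sum_add_distrib]
          exact Finset.sum_congr rfl fun i _ => by ring
      _ ≤ -κc (∑ i, μw i * Vi i (x i) (xh i)) +
          ρc (Real.sqrt (∑ i, ‖νh i‖ ^ 2)) + ∑ i, μw i * ψ i := by
          linarith [hquadsum, hκbound, hρbound]
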